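/- Let Δ be a positive invertible self-adjoint operator with compact resolvent such that Δ^{-1/r} ∈ L^p(H) for some p ≥ 1, and let X ∈ Op^{-t} for some real t. Then the spectral zeta function z ↦ Trace(X Δ^{-z}) is holomorphic on the half-plane {Re(z) > (p - t)/r}. -/

import Mathlib

open Filter

private lemma aux_summable (lam : ℕ → ℝ) (hpos : ∀ n, 0 < lam n)
    (hcpt : Tendsto lam atTop atTop) {b a : ℝ}
    (hb : Summable fun n => lam n ^ (-b)) (hab : b ≤ a) :
    Summable fun n => lam n ^ (-a) := by
  apply Summable.of_norm_bounded_eventually_nat hb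
  filter_upwards [hcpt.eventually_ge_atTop 1] with n hn
  rw [Real.norm_eq_abs, abs_of_nonneg (Real.rpow_nonneg (hpos n).le _)]
  exact Real.rpow_le_rpow_of_exponent_le hn (neg_le_neg hab)

/-- If `Δ^{-1/r} ∈ L^p(H)` (Schatten) and `X ∈ Op^{-t}` (i.e. `X = Δ^{-t/r} B` with
`B` bounded), then the spectral zeta function `z ↦ Trace(X Δ^{-z})` is holomorphic on
`{Re z > (p-t)/r}`.  `Δ` is presented by its spectral data, and the trace is the sum
of diagonal matrix coefficients with respect to the eigenbasis. -/
theorem spectral_zeta_holomorphic {H : Type*} [NormedAddCommGroup H]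
    [InnerProductSpace ℂ H] [CompleteSpace H]
    (e : HilbertBasis ℕ ℂ H) (lam : ℕ → ℝ)
    (hpos : ∀ n, 0 < lam n) (hinv : ∃ c > 0, ∀ n, c ≤ lam n)
    (hcpt : Filter.Tendsto lam Filter.atTop Filter.atTop)
    (r : ℕ) (hr : 1 ≤ r) (p : ℝ) (hp : 1 ≤ p)
    (hSchatten : Summable fun n => (lam n) ^ (-(p / r)))
    (t : ℝ) (X B : H →L[ℂ] H)
    (hX : ∀ (v : H) (n : ℕ),
      (inner ℂ (e n) (X v) : ℂ) = (((lam n) ^ (-(t / r)) : ℝ) : ℂ) * (inner ℂ (e n) (B v) : ℂ)) :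
    DifferentiableOn ℂ
      (fun z : ℂ => ∑' n, (lam n : ℂ) ^ (-z) * (inner ℂ (e n) (X (e n)) : ℂ))
      {z : ℂ | (p - t) / r < z.re} := by
  have hrpos : (0 : ℝ) < (r : ℝ) := by exact_mod_cast Nat.lt_of_lt_of_le Nat.zero_lt_one hr
  intro z₀ hz₀
  simp only [Set.mem_setOf_eq] at hz₀
  set σ : ℝ := ((p - t) / r + z₀.re) / 2 with hσdef
  have hσ1 : (p - t) / r < σ := by simp only [hσdef]; linarith
  have hσ2 : σ < z₀.re := by simp only [hσdef]; linarith
  set M : ℝ := z₀.re + 1 with hMdef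
  have hσM : σ < M := by simp only [hMdef]; linarith
  set U : Set ℂ := Complex.re ⁻¹' Set.Ioo σ M with hUdef
  have hUopen : IsOpen U := isOpen_Ioo.preimage Complex.continuous_re
  have hz₀U : z₀ ∈ U := ⟨hσ2, by simp [hMdef]⟩
  -- summable bound
  have hpr : p / (r : ℝ) = (p - t) / r + t / r := by
    rw [← add_div]; ring_nf
  have h1 : Summable fun n => lam n ^ (-(σ + t / r)) :=
    aux_summable lam hpos hcpt hSchatten (by rw [hpr]; linarith)
  have h2 : Summable fun n => lam n ^ (-(M + t / r)) :=
    aux_summable lam hpos hcpt hSchatten (by rw [hpr]; linarith)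
  have hu : Summable fun n =>
      (lam n ^ (-σ) + lam n ^ (-M)) * (lam n ^ (-(t / r)) * ‖B‖) := by
    refine ((h1.add h2).mul_right ‖B‖).congr fun n => ?_
    rw [neg_add, neg_add, Real.rpow_add (hpos n), Real.rpow_add (hpos n)]
    ring
  -- differentiability of terms
  have hf : ∀ n : ℕ, DifferentiableOn ℂ
      (fun z : ℂ => (lam n : ℂ) ^ (-z) * (inner ℂ (e n) (X (e n)) : ℂ)) U := fun n =>
    ((differentiable_id.neg.const_cpow
        (Or.inl (Complex.ofReal_ne_zero.mpr (hpos n).ne'))).mul_const _).differentiableOn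
  -- norm bound
  have hF_le : ∀ (n : ℕ) (z : ℂ), z ∈ U →
      ‖(lam n : ℂ) ^ (-z) * (inner ℂ (e n) (X (e n)) : ℂ)‖ ≤
        (lam n ^ (-σ) + lam n ^ (-M)) * (lam n ^ (-(t / r)) * ‖B‖) := by
    intro n z hz
    obtain ⟨hz1, hz2⟩ := hz
    have hcpow : ‖(lam n : ℂ) ^ (-z)‖ = lam n ^ (-z.re) := by
      rw [Complex.norm_cpow_eq_rpow_re_of_pos (hpos n), Complex.neg_re]
    have hbase : lam n ^ (-z.re) ≤ lam n ^ (-σ) + lam n ^ (-M) := by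
      rcases le_or_gt 1 (lam n) with h | h
      · have := Real.rpow_le_rpow_of_exponent_le h (neg_le_neg hz1.le)
        have h0 : (0:ℝ) ≤ lam n ^ (-M) := Real.rpow_nonneg (hpos n).le _
        linarith
      · have := Real.rpow_le_rpow_of_exponent_ge (hpos n) h.le (neg_le_neg hz2.le)
        have h0 : (0:ℝ) ≤ lam n ^ (-σ) := Real.rpow_nonneg (hpos n).le _
        linarith
    have hinner : ‖(inner ℂ (e n) (X (e n)) : ℂ)‖ ≤ lam n ^ (-(t / r)) * ‖B‖ := by
      rw [hX (e n) n, norm_mul, Complex.norm_real, Real.norm_eq_abs,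
        abs_of_nonneg (Real.rpow_nonneg (hpos n).le _)]
      refine mul_le_mul_of_nonneg_left ?_ (Real.rpow_nonneg (hpos n).le _)
      calc ‖(inner ℂ (e n) (B (e n)) : ℂ)‖ ≤ ‖(e n : H)‖ * ‖B (e n)‖ := norm_inner_le_norm _ _
        _ ≤ 1 * (‖B‖ * ‖(e n : H)‖) := by
            exact mul_le_mul (le_of_eq (e.orthonormal.1 n)) (B.le_opNorm _)
              (norm_nonneg _) one_pos.le
        _ = ‖B‖ := by rw [e.orthonormal.1 n]; ring
    calc ‖(lam n : ℂ) ^ (-z) * (inner ℂ (e n) (X (e n)) : ℂ)‖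
        = lam n ^ (-z.re) * ‖(inner ℂ (e n) (X (e n)) : ℂ)‖ := by rw [norm_mul, hcpow]
      _ ≤ (lam n ^ (-σ) + lam n ^ (-M)) * (lam n ^ (-(t / r)) * ‖B‖) :=
          mul_le_mul hbase hinner (norm_nonneg _)
            (add_nonneg (Real.rpow_nonneg (hpos n).le _) (Real.rpow_nonneg (hpos n).le _))
  have key := Complex.differentiableOn_tsum_of_summable_norm hu hf hUopen hF_le
  exact (key.differentiableAt (hUopen.mem_nhds hz₀U)).differentiableWithinAt
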